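/- Let γ₁, γ₂ ∈ (-1, -1/2) with γ₁ + γ₂ > -3/2, let A ∈ ℝ, and define g(x,y) = (A/2)·(x₊^{γ₁} y₊^{γ₂} + x₊^{γ₂} y₊^{γ₁}). For s₁ < s₂ < s₃, the integral ∫_{ℝ³} g(s₁-x₁, s₁-x₂) g(s₂-x₂, s₂-x₃) g(s₃-x₃, s₃-x₁) dx₁dx₂dx₃ equals (A/2)³ · Σ_{σ ∈ {1,2}³} B(γ_{σ₁}+1, -γ_{σ₃'}-γ_{σ₁}-1) · B(γ_{σ₁'}+1, -γ_{σ₁'}-γ_{σ₂}-1) · B(γ_{σ₂'}+1, -γ_{σ₂'}-γ_{σ₃}-1) · (s₃-s₁)^{γ_{σ₃'}+γ_{σ₁}+1} · (s₂-s₁)^{γ_{σ₁'}+γ_{σ₂}+1} · (s₃-s₂)^{γ_{σ₂'}+γ_{σ₃}+1}, where for σ = (σ₁,σ₂,σ₃) with σ_i ∈ {1,2} the complement is σ_i' = 3 - σ_i. -/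

import Mathlib

open MeasureTheory

/-- The Euler beta function `B(x,y) = Γ(x)Γ(y)/Γ(x+y)`. -/
noncomputable def eulerBeta (x y : ℝ) : ℝ := Real.Gamma x * Real.Gamma y / Real.Gamma (x + y)

/-- The generalized Rosenblatt kernel
`g(x,y) = (A/2) (x₊^{γ₁} y₊^{γ₂} + x₊^{γ₂} y₊^{γ₁})`. -/
noncomputable def genRosenblattKernel (A γ₁ γ₂ : ℝ) (x y : ℝ) : ℝ :=
  A / 2 * ((max x 0) ^ γ₁ * (max y 0) ^ γ₂ + (max x 0) ^ γ₂ * (max y 0) ^ γ₁)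

open Set

lemma betaInt_integrableOn {p q : ℝ} (hp : 0 < p) (hq : 0 < q) :
    IntegrableOn (fun x : ℝ => x ^ (p-1) * (1-x) ^ (q-1)) (Ioc 0 1) := by
  have h := (Complex.betaIntegral_convergent (u := (p:ℂ)) (v := (q:ℂ))
    (by simpa using hp) (by simpa using hq)).1
  have h2 : IntegrableOn (fun x : ℝ => ((x ^ (p-1) * (1-x) ^ (q-1) : ℝ) : ℂ)) (Ioc 0 1) := by
    refine h.congr_fun (fun x hx => ?_) measurableSet_Ioc
    rw [Complex.ofReal_mul, Complex.ofReal_cpow hx.1.le, Complex.ofReal_cpow (by linarith [hx.2])]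
    push_cast
    ring
  simpa [IntegrableOn] using h2.re

lemma betaInt_eq {p q : ℝ} (hp : 0 < p) (hq : 0 < q) :
    ∫ x in Ioc (0:ℝ) 1, x ^ (p-1) * (1-x) ^ (q-1) = eulerBeta p q := by
  have key := Complex.Gamma_mul_Gamma_eq_betaIntegral (s:=(p:ℂ)) (t:=(q:ℂ))
    (by simpa using hp) (by simpa using hq)
  have hIoc : Complex.betaIntegral p q
      = ((∫ x in Ioc (0:ℝ) 1, x ^ (p-1) * (1-x) ^ (q-1) : ℝ) : ℂ) := by
    have hco : ∫ x in Ioc (0:ℝ) 1, ((x ^ (p-1) * (1-x) ^ (q-1) : ℝ) : ℂ)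
        = ((∫ x in Ioc (0:ℝ) 1, x ^ (p-1) * (1-x) ^ (q-1) : ℝ) : ℂ) := integral_ofReal
    rw [Complex.betaIntegral, intervalIntegral.integral_of_le zero_le_one, ← hco]
    refine setIntegral_congr_fun measurableSet_Ioc fun x hx => ?_
    rw [Complex.ofReal_mul, Complex.ofReal_cpow hx.1.le, Complex.ofReal_cpow (by linarith [hx.2])]
    push_cast
    ring
  rw [hIoc, ← Complex.ofReal_add, Complex.Gamma_ofReal, Complex.Gamma_ofReal,
    Complex.Gamma_ofReal, ← Complex.ofReal_mul, ← Complex.ofReal_mul] at key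
  have key' := Complex.ofReal_inj.mp key
  have hne : Real.Gamma (p + q) ≠ 0 := (Real.Gamma_pos_of_pos (by linarith)).ne'
  rw [eulerBeta, eq_div_iff hne, mul_comm, key']

lemma J_int_eq {a b c : ℝ} (ha : -1 < a) (hab : a + b < -1) (hc : 0 < c) :
    IntegrableOn (fun y : ℝ => y ^ a * (y + c) ^ b) (Ioi 0) ∧
    ∫ y in Ioi (0:ℝ), y ^ a * (y + c) ^ b = eulerBeta (a+1) (-a-b-1) * c ^ (a+b+1) := by
  have hp : 0 < a + 1 := by linarith
  have hq : 0 < -a - b - 1 := by linarith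
  set φ : ℝ → ℝ := fun u => c * u / (1 - u) with hφ
  have himg : φ '' Ioo 0 1 = Ioi 0 := by
    ext y
    constructor
    · rintro ⟨u, ⟨hu0, hu1⟩, rfl⟩
      exact div_pos (mul_pos hc hu0) (by linarith)
    · intro hy
      rw [mem_Ioi] at hy
      have hyc : 0 < y + c := by linarith
      refine ⟨y / (y + c), ⟨div_pos hy hyc, (div_lt_one hyc).mpr (by linarith)⟩, ?_⟩
      rw [hφ]
      field_simp
      rw [show y + c - y = c by ring, div_self hc.ne']
  have hderiv : ∀ u ∈ Ioo (0:ℝ) 1, HasDerivWithinAt φ (c / (1-u)^2) (Ioo 0 1) u := by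
    intro u hu
    have hu1 : (1:ℝ) - u ≠ 0 := by have := hu.2; intro h; linarith [hu.2]
    have h1 : HasDerivAt (fun u:ℝ => c * u) c u := by
      simpa using (hasDerivAt_id u).const_mul c
    have h2 : HasDerivAt (fun u:ℝ => 1 - u) (-1) u := by
      simpa using (hasDerivAt_id u).const_sub 1
    have := (h1.div h2 hu1).hasDerivWithinAt (s := Ioo (0:ℝ) 1)
    convert this using 1
    · rfl
    · rfl
    · rfl
    · ring
  have hinj : InjOn φ (Ioo 0 1) := by
    have hmono : StrictMonoOn φ (Ioo 0 1) := by
      intro u hu v hv huv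
      have h1u : (0:ℝ) < 1 - u := by linarith [hu.2]
      have h1v : (0:ℝ) < 1 - v := by linarith [hv.2]
      rw [hφ]
      simp only
      rw [div_lt_div_iff₀ h1u h1v]
      nlinarith [hu.1, hv.1]
    exact hmono.injOn
  have hpt : ∀ u ∈ Ioo (0:ℝ) 1, |c / (1-u)^2| • (φ u ^ a * (φ u + c) ^ b)
      = c ^ (a+b+1) * (u ^ ((a+1)-1) * (1-u) ^ ((-a-b-1)-1)) := by
    intro u hu
    obtain ⟨hu0, hu1⟩ := hu
    have hw : (0:ℝ) < 1 - u := by linarith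
    have h1 : φ u + c = c / (1 - u) := by rw [hφ]; field_simp; ring
    have h2 : φ u = c * u / (1 - u) := rfl
    rw [smul_eq_mul, h1, h2, abs_of_pos (by positivity),
      Real.div_rpow (by positivity) hw.le, Real.div_rpow hc.le hw.le,
      Real.mul_rpow hc.le hu0.le]
    rw [show ((1:ℝ)-u)^2 = (1-u)^((2:ℕ):ℝ) by rw [Real.rpow_natCast],
      div_eq_mul_inv, div_eq_mul_inv, div_eq_mul_inv,
      ← Real.rpow_neg hw.le, ← Real.rpow_neg hw.le, ← Real.rpow_neg hw.le]
    rw [show (a+1)-1 = a by ring, show (-a-b-1)-1 = -((2:ℕ):ℝ) + (-a + -b) by push_cast; ring,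
      show a+b+1 = a + (b + 1) by ring]
    rw [Real.rpow_add hw, Real.rpow_add hw, Real.rpow_add hc, Real.rpow_add hc, Real.rpow_one]
    ring
  constructor
  · rw [← himg, integrableOn_image_iff_integrableOn_abs_deriv_smul measurableSet_Ioo hderiv hinj]
    have base : IntegrableOn
        (fun u : ℝ => c ^ (a+b+1) * (u ^ ((a+1)-1) * (1-u) ^ ((-a-b-1)-1))) (Ioo 0 1) :=
      (((betaInt_integrableOn hp hq).mono_set Ioo_subset_Ioc_self).const_mul _)
    exact base.congr_fun (fun u hu => (hpt u hu).symm) measurableSet_Ioo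
  · rw [← himg, integral_image_eq_integral_abs_deriv_smul measurableSet_Ioo hderiv hinj,
      setIntegral_congr_fun measurableSet_Ioo hpt, integral_const_mul,
      ← integral_Ioc_eq_integral_Ioo, betaInt_eq hp hq, mul_comm]

lemma F_int_eq {a b s t : ℝ} (ha : -1 < a) (ha0 : a < 0) (hab : a + b < -1) (hst : s < t) :
    Integrable (fun x : ℝ => (max (s - x) 0) ^ a * (max (t - x) 0) ^ b) ∧
    ∫ x : ℝ, (max (s - x) 0) ^ a * (max (t - x) 0) ^ b
      = eulerBeta (a+1) (-a-b-1) * (t-s) ^ (a+b+1) := by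
  have hc : (0:ℝ) < t - s := by linarith
  obtain ⟨hJint, hJeq⟩ := J_int_eq ha hab hc
  set G : ℝ → ℝ := fun y => (max y 0) ^ a * (max (y + (t-s)) 0) ^ b with hG
  have hGind : G = (Ioi (0:ℝ)).indicator (fun y => y ^ a * (y + (t-s)) ^ b) := by
    funext y
    by_cases hy : 0 < y
    · rw [indicator_of_mem (mem_Ioi.mpr hy), hG]
      simp only
      rw [max_eq_left hy.le, max_eq_left (by linarith)]
    · rw [indicator_of_notMem (by simpa using hy), hG]
      simp only
      push_neg at hy
      rw [max_eq_right hy, Real.zero_rpow (ne_of_lt ha0), zero_mul]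
  have hGint : Integrable G := by
    rw [hGind]; exact hJint.integrable_indicator measurableSet_Ioi
  have hGeq : ∫ y, G y = eulerBeta (a+1) (-a-b-1) * (t-s) ^ (a+b+1) := by
    rw [hGind, integral_indicator measurableSet_Ioi, hJeq]
  have hFG : (fun x : ℝ => (max (s - x) 0) ^ a * (max (t - x) 0) ^ b)
      = fun x => G (s - x) := by
    funext x
    rw [hG]
    simp only
    rw [show s - x + (t - s) = t - x by ring]
  constructor
  · rw [hFG]; exact hGint.comp_sub_left s
  · rw [hFG, integral_sub_left_eq_self G volume s, hGeq]

def finTripleEquiv : (Fin 2 × Fin 2 × Fin 2) ≃ (Fin 3 → Fin 2) where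
  toFun p := ![p.1, p.2.1, p.2.2]
  invFun σ := (σ 0, σ 1, σ 2)
  left_inv p := rfl
  right_inv σ := by funext i; fin_cases i <;> rfl

lemma sum_fin32 (F : (Fin 3 → Fin 2) → ℝ) :
    ∑ σ : Fin 3 → Fin 2, F σ = ∑ p : Fin 2 × Fin 2 × Fin 2, F ![p.1, p.2.1, p.2.2] :=
  (Fintype.sum_equiv finTripleEquiv _ _ (fun _ => rfl)).symm


/-- For `s₁ < s₂ < s₃`, `∫_{ℝ³} g(s₁-x₁,s₁-x₂) g(s₂-x₂,s₂-x₃) g(s₃-x₃,s₃-x₁) dx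
  = (A/2)³ Σ_{σ∈{1,2}³} B(γ_{σ₁}+1,-γ_{σ₃'}-γ_{σ₁}-1) B(γ_{σ₁'}+1,-γ_{σ₁'}-γ_{σ₂}-1)
      B(γ_{σ₂'}+1,-γ_{σ₂'}-γ_{σ₃}-1) (s₃-s₁)^{γ_{σ₃'}+γ_{σ₁}+1} (s₂-s₁)^{γ_{σ₁'}+γ_{σ₂}+1}
      (s₃-s₂)^{γ_{σ₂'}+γ_{σ₃}+1}`,
where the sum ranges over maps `σ : Fin 3 → Fin 2` (values indexing `γ = ![γ₁, γ₂]`)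
and the complement `σ'` is given by `Fin.rev`. -/
theorem circular_integral_three
    (γ₁ γ₂ : ℝ) (h1 : γ₁ ∈ Set.Ioo (-1 : ℝ) (-1/2)) (h2 : γ₂ ∈ Set.Ioo (-1 : ℝ) (-1/2))
    (hsum : γ₁ + γ₂ > -3/2) (A : ℝ) (s₁ s₂ s₃ : ℝ) (hs12 : s₁ < s₂) (hs23 : s₂ < s₃) :
    (∫ x : Fin 3 → ℝ,
        genRosenblattKernel A γ₁ γ₂ (s₁ - x 0) (s₁ - x 1) *
          genRosenblattKernel A γ₁ γ₂ (s₂ - x 1) (s₂ - x 2) *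
            genRosenblattKernel A γ₁ γ₂ (s₃ - x 2) (s₃ - x 0))
      = (A / 2) ^ 3 *
          ∑ σ : Fin 3 → Fin 2,
            eulerBeta (![γ₁, γ₂] (σ 0) + 1)
                (-(![γ₁, γ₂] ((σ 2).rev)) - ![γ₁, γ₂] (σ 0) - 1) *
              eulerBeta (![γ₁, γ₂] ((σ 0).rev) + 1)
                (-(![γ₁, γ₂] ((σ 0).rev)) - ![γ₁, γ₂] (σ 1) - 1) *
              eulerBeta (![γ₁, γ₂] ((σ 1).rev) + 1)
                (-(![γ₁, γ₂] ((σ 1).rev)) - ![γ₁, γ₂] (σ 2) - 1) *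
              (s₃ - s₁) ^ (![γ₁, γ₂] ((σ 2).rev) + ![γ₁, γ₂] (σ 0) + 1) *
              (s₂ - s₁) ^ (![γ₁, γ₂] ((σ 0).rev) + ![γ₁, γ₂] (σ 1) + 1) *
              (s₃ - s₂) ^ (![γ₁, γ₂] ((σ 1).rev) + ![γ₁, γ₂] (σ 2) + 1) := by
  obtain ⟨hγ1l, hγ1u⟩ := h1
  obtain ⟨hγ2l, hγ2u⟩ := h2
  set G : Fin 2 → ℝ := ![γ₁, γ₂] with hGdef
  have hGl : ∀ i, -1 < G i := by intro i; fin_cases i <;> simpa [hGdef]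
  have hGu : ∀ i, G i < 0 := by
    intro i; fin_cases i <;> simp [hGdef] <;> linarith
  have hGsum : ∀ i j, G i + G j < -1 := by
    intro i j
    have hi : G i < -1/2 := by fin_cases i <;> simpa [hGdef]
    have hj : G j < -1/2 := by fin_cases j <;> simpa [hGdef]
    linarith
  set H : (Fin 3 → Fin 2) → Fin 3 → ℝ → ℝ := fun σ =>
    ![fun x => (max (s₁ - x) 0) ^ G (σ 0) * (max (s₃ - x) 0) ^ G ((σ 2).rev),
      fun x => (max (s₁ - x) 0) ^ G ((σ 0).rev) * (max (s₂ - x) 0) ^ G (σ 1),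
      fun x => (max (s₂ - x) 0) ^ G ((σ 1).rev) * (max (s₃ - x) 0) ^ G (σ 2)] with hHdef
  have hs13 : s₁ < s₃ := hs12.trans hs23
  have hint : ∀ σ, ∀ i : Fin 3, Integrable (H σ i) := by
    intro σ i
    fin_cases i
    · simpa [hHdef] using (F_int_eq (hGl (σ 0)) (hGu (σ 0)) (hGsum _ _) hs13).1
    · simpa [hHdef] using (F_int_eq (hGl ((σ 0).rev)) (hGu ((σ 0).rev)) (hGsum _ _) hs12).1
    · simpa [hHdef] using (F_int_eq (hGl ((σ 1).rev)) (hGu ((σ 1).rev)) (hGsum _ _) hs23).1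
  have hrev0 : (0 : Fin 2).rev = 1 := rfl
  have hrev1 : (1 : Fin 2).rev = 0 := rfl
  calc
    (∫ x : Fin 3 → ℝ,
        genRosenblattKernel A γ₁ γ₂ (s₁ - x 0) (s₁ - x 1) *
          genRosenblattKernel A γ₁ γ₂ (s₂ - x 1) (s₂ - x 2) *
            genRosenblattKernel A γ₁ γ₂ (s₃ - x 2) (s₃ - x 0))
        = ∫ x : Fin 3 → ℝ, ∑ σ : Fin 3 → Fin 2, (A/2)^3 * ∏ i, H σ i (x i) := by
      congr 1
      funext x
      rw [sum_fin32]
      simp only [genRosenblattKernel, hHdef, hGdef, Fintype.sum_prod_type, Fin.sum_univ_two,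
        Fin.prod_univ_three, Matrix.cons_val_zero, Matrix.cons_val_one, Matrix.head_cons,
        Matrix.cons_val_two, Matrix.tail_cons, hrev0, hrev1]
      ring
    _ = ∑ σ : Fin 3 → Fin 2, ∫ x : Fin 3 → ℝ, (A/2)^3 * ∏ i, H σ i (x i) :=
      integral_finset_sum _ (fun σ _ => ((Integrable.fintype_prod (hint σ)).const_mul _))
    _ = ∑ σ : Fin 3 → Fin 2, (A/2)^3 * ∏ i : Fin 3, ∫ x : ℝ, H σ i x := by
      refine Finset.sum_congr rfl fun σ _ => ?_
      rw [integral_const_mul, integral_fintype_prod_volume_eq_prod (f := H σ)]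
    _ = _ := by
      rw [Finset.mul_sum]
      refine Finset.sum_congr rfl fun σ _ => ?_
      rw [Fin.prod_univ_three]
      have e0 : ∫ x : ℝ, H σ 0 x
          = eulerBeta (G (σ 0) + 1) (-(G (σ 0)) - G ((σ 2).rev) - 1)
            * (s₃ - s₁) ^ (G (σ 0) + G ((σ 2).rev) + 1) := by
        simpa [hHdef] using (F_int_eq (hGl (σ 0)) (hGu (σ 0)) (hGsum _ _) hs13).2
      have e1 : ∫ x : ℝ, H σ 1 x
          = eulerBeta (G ((σ 0).rev) + 1) (-(G ((σ 0).rev)) - G (σ 1) - 1)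
            * (s₂ - s₁) ^ (G ((σ 0).rev) + G (σ 1) + 1) := by
        simpa [hHdef] using (F_int_eq (hGl ((σ 0).rev)) (hGu ((σ 0).rev)) (hGsum _ _) hs12).2
      have e2 : ∫ x : ℝ, H σ 2 x
          = eulerBeta (G ((σ 1).rev) + 1) (-(G ((σ 1).rev)) - G (σ 2) - 1)
            * (s₃ - s₂) ^ (G ((σ 1).rev) + G (σ 2) + 1) := by
        simpa [hHdef] using (F_int_eq (hGl ((σ 1).rev)) (hGu ((σ 1).rev)) (hGsum _ _) hs23).2
      rw [e0, e1, e2,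
        show -(G (σ 0)) - G ((σ 2).rev) - 1 = -(G ((σ 2).rev)) - G (σ 0) - 1 by ring,
        show G (σ 0) + G ((σ 2).rev) + 1 = G ((σ 2).rev) + G (σ 0) + 1 by ring]
      ring
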